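/- Let A be a symmetric bilinear form on an n-dimensional Euclidean space with orthonormal eigenbasis e_1,...,e_n and eigenvalues λ_1,...,λ_n. Suppose real numbers c_1,...,c_n (not all zero) and λ satisfy Σ_p c_p = 0 and 2λ_p c_p − (2/n) Σ_q c_q λ_q = λ c_p for all p. Then the tensor Σ_p c_p e_p ⊙ e_p is a nonzero trace-free symmetric two-tensor and (π ∘ (A ⊙∧ id))(Σ_p c_p e_p ⊙ e_p) = λ Σ_p c_p e_p ⊙ e_p, where π is the orthogonal projection from symmetric two-tensors to trace-free symmetric two-tensors. -/

import Mathlib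

open Finset

/-- The Kulkarni–Nomizu product `A ⊙∧ id`, acting on two-tensors `φ` by
`(Rφ)_{il} = Σ_{j,k} (A_{ik}δ_{jl} + A_{jl}δ_{ik} − A_{jk}δ_{il} − A_{il}δ_{jk}) φ_{jk}`. -/
noncomputable def KNid {n : ℕ} (A φ : Matrix (Fin n) (Fin n) ℝ) :
    Matrix (Fin n) (Fin n) ℝ :=
  fun i l => ∑ j : Fin n, ∑ k : Fin n,
    (A i k * (if j = l then (1:ℝ) else 0) + A j l * (if i = k then (1:ℝ) else 0)
      - A j k * (if i = l then (1:ℝ) else 0) - A i l * (if j = k then (1:ℝ) else 0)) * φ j k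

/-- The symmetric product `u ⊙ v = u ⊗ v + v ⊗ u` as a matrix. -/
noncomputable def symProd {n : ℕ} (u v : Fin n → ℝ) : Matrix (Fin n) (Fin n) ℝ :=
  fun i j => u i * v j + v i * u j

/-- Orthogonal projection onto trace-free symmetric two-tensors:
`π(φ) = φ − (tr φ / n) g`. -/
noncomputable def tracefreeProj {n : ℕ} (φ : Matrix (Fin n) (Fin n) ℝ) :
    Matrix (Fin n) (Fin n) ℝ :=
  φ - (φ.trace / n) • (1 : Matrix (Fin n) (Fin n) ℝ)


lemma KNid_expand {n : ℕ} (A φ : Matrix (Fin n) (Fin n) ℝ) (i l : Fin n) :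
    KNid A φ i l = (∑ k, A i k * φ l k) + (∑ j, A j l * φ j i)
      - (if i = l then (1:ℝ) else 0) * (∑ j, ∑ k, A j k * φ j k)
      - A i l * (∑ j, φ j j) := by
  unfold KNid
  simp only [add_mul, sub_mul, ite_mul, one_mul, zero_mul,
    Finset.sum_add_distrib, Finset.sum_sub_distrib, Finset.mul_sum]
  congr 1
  · congr 1
    · congr 1
      · rw [Finset.sum_comm]
        simp [Finset.sum_ite_eq']
      · simp [Finset.sum_ite_eq]
    · rcases eq_or_ne i l with h | h <;> simp [h]
  · simp [Finset.sum_ite_eq]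

lemma swap3 {n : ℕ} (f : Fin n → Fin n → Fin n → ℝ) :
    ∑ i : Fin n, ∑ l : Fin n, ∑ q : Fin n, f i l q
      = ∑ q : Fin n, ∑ i : Fin n, ∑ l : Fin n, f i l q := by
  have h1 : ∀ i, ∑ l : Fin n, ∑ q : Fin n, f i l q = ∑ q : Fin n, ∑ l : Fin n, f i l q :=
    fun i => Finset.sum_comm
  simp_rw [h1]
  exact Finset.sum_comm

theorem stmt2 {n : ℕ} (hn : 0 < n) (A : Matrix (Fin n) (Fin n) ℝ) (hA : A.IsSymm)
    (e : Fin n → Fin n → ℝ) (lam : Fin n → ℝ)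
    (horth : ∀ p q : Fin n, ∑ i : Fin n, e p i * e q i = if p = q then (1:ℝ) else 0)
    (heig : ∀ p : Fin n, A.mulVec (e p) = lam p • e p)
    (c : Fin n → ℝ) (lamE : ℝ) (hc : c ≠ 0)
    (hsum : ∑ p : Fin n, c p = 0)
    (heq : ∀ p : Fin n, 2 * lam p * c p - (2 / (n : ℝ)) * ∑ q : Fin n, c q * lam q
      = lamE * c p) :
    (∑ p : Fin n, c p • symProd (e p) (e p)) ≠ 0 ∧
    (∑ p : Fin n, c p • symProd (e p) (e p)).trace = 0 ∧
    ((∑ p : Fin n, c p • symProd (e p) (e p)) : Matrix (Fin n) (Fin n) ℝ).IsSymm ∧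
    tracefreeProj (KNid A (∑ p : Fin n, c p • symProd (e p) (e p)))
      = lamE • ∑ p : Fin n, c p • symProd (e p) (e p) := by
    classical
  set φ : Matrix (Fin n) (Fin n) ℝ := ∑ p : Fin n, c p • symProd (e p) (e p) with hφdef
  set S : ℝ := ∑ q : Fin n, c q * lam q with hSdef
  have hn' : (n : ℝ) ≠ 0 := Nat.cast_ne_zero.mpr hn.ne'
  have hφ : ∀ i l : Fin n, φ i l = 2 * ∑ p : Fin n, c p * (e p i * e p l) := by
    intro i l
    rw [Finset.mul_sum, hφdef]
    simp only [Matrix.sum_apply, Matrix.smul_apply, symProd, smul_eq_mul]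
    exact Finset.sum_congr rfl fun p _ => by ring
  have hcol : ∀ i l : Fin n, ∑ p : Fin n, e p i * e p l = if i = l then (1:ℝ) else 0 := by
    have hE : (Matrix.of e) * (Matrix.of e).transpose = 1 := by
      ext p q
      simpa [Matrix.mul_apply, Matrix.one_apply] using horth p q
    have hE' : (Matrix.of e).transpose * (Matrix.of e) = 1 := mul_eq_one_comm.mp hE
    intro i l
    have := congrFun (congrFun hE' i) l
    simpa [Matrix.mul_apply, Matrix.one_apply, mul_comm] using this
  have heig' : ∀ p i : Fin n, ∑ k : Fin n, A i k * e p k = lam p * e p i := by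
    intro p i
    have := congrFun (heig p) i
    simpa [Matrix.mulVec, dotProduct] using this
  have hAs : ∀ i j : Fin n, A i j = A j i := by
    intro i j
    exact congrFun (congrFun hA j) i
  have htr : φ.trace = 0 := by
    have h1 : φ.trace = ∑ i : Fin n, φ i i := rfl
    rw [h1]
    calc (∑ i : Fin n, φ i i)
        = ∑ i : Fin n, ∑ p : Fin n, 2 * (c p * (e p i * e p i)) := by
          refine Finset.sum_congr rfl fun i _ => ?_
          rw [hφ i i, Finset.mul_sum]
      _ = ∑ p : Fin n, 2 * c p * ∑ i : Fin n, e p i * e p i := by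
          rw [Finset.sum_comm]
          refine Finset.sum_congr rfl fun p _ => ?_
          rw [Finset.mul_sum]
          exact Finset.sum_congr rfl fun i _ => by ring
      _ = ∑ p : Fin n, 2 * c p := by
          refine Finset.sum_congr rfl fun p _ => ?_
          rw [horth p p, if_pos rfl, mul_one]
      _ = 0 := by rw [← Finset.mul_sum, hsum, mul_zero]
  have hne : φ ≠ 0 := by
    intro h0
    obtain ⟨p, hp⟩ := Function.ne_iff.mp hc
    apply hp
    have hval : ∑ i : Fin n, ∑ l : Fin n, e p i * e p l * φ i l = 2 * c p := by
      calc ∑ i : Fin n, ∑ l : Fin n, e p i * e p l * φ i l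
          = ∑ i : Fin n, ∑ l : Fin n, ∑ q : Fin n,
              (2 * c q) * ((e p i * e q i) * (e p l * e q l)) := by
            refine Finset.sum_congr rfl fun i _ => Finset.sum_congr rfl fun l _ => ?_
            rw [hφ i l, Finset.mul_sum, Finset.mul_sum]
            exact Finset.sum_congr rfl fun q _ => by ring
        _ = ∑ q : Fin n, ∑ i : Fin n, ∑ l : Fin n,
              (2 * c q) * ((e p i * e q i) * (e p l * e q l)) := swap3 _
        _ = ∑ q : Fin n, (2 * c q) *
              ((∑ i : Fin n, e p i * e q i) * (∑ l : Fin n, e p l * e q l)) := by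
            refine Finset.sum_congr rfl fun q _ => ?_
            rw [Finset.sum_mul_sum, Finset.mul_sum]
            refine Finset.sum_congr rfl fun i _ => ?_
            rw [Finset.mul_sum]
        _ = 2 * c p := by
            simp [horth, mul_ite, ite_mul, Finset.sum_ite_eq]
    rw [h0] at hval
    simp at hval
    simpa using hval
  have hsymm : φ.IsSymm := by
    show φ.transpose = φ
    ext i j
    rw [Matrix.transpose_apply, hφ i j, hφ j i]
    congr 1
    exact Finset.sum_congr rfl fun p _ => by ring
  have hKN : ∀ i l : Fin n, KNid A φ i l
      = 4 * (∑ p : Fin n, c p * lam p * (e p i * e p l))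
        - (if i = l then (1:ℝ) else 0) * (2 * S) := by
    intro i l
    rw [KNid_expand]
    have T1 : ∑ k : Fin n, A i k * φ l k
        = 2 * ∑ p : Fin n, c p * lam p * (e p i * e p l) := by
      calc ∑ k : Fin n, A i k * φ l k
          = ∑ k : Fin n, ∑ p : Fin n, (2 * c p * e p l) * (A i k * e p k) := by
            refine Finset.sum_congr rfl fun k _ => ?_
            rw [hφ l k, Finset.mul_sum, Finset.mul_sum]
            exact Finset.sum_congr rfl fun p _ => by ring
        _ = ∑ p : Fin n, (2 * c p * e p l) * ∑ k : Fin n, A i k * e p k := by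
            rw [Finset.sum_comm]
            exact Finset.sum_congr rfl fun p _ => (Finset.mul_sum _ _ _).symm
        _ = 2 * ∑ p : Fin n, c p * lam p * (e p i * e p l) := by
            rw [Finset.mul_sum]
            refine Finset.sum_congr rfl fun p _ => ?_
            rw [heig' p i]; ring
    have T2 : ∑ j : Fin n, A j l * φ j i
        = 2 * ∑ p : Fin n, c p * lam p * (e p i * e p l) := by
      calc ∑ j : Fin n, A j l * φ j i
          = ∑ j : Fin n, ∑ p : Fin n, (2 * c p * e p i) * (A l j * e p j) := by
            refine Finset.sum_congr rfl fun j _ => ?_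
            rw [hφ j i, Finset.mul_sum, Finset.mul_sum, hAs j l]
            exact Finset.sum_congr rfl fun p _ => by ring
        _ = ∑ p : Fin n, (2 * c p * e p i) * ∑ j : Fin n, A l j * e p j := by
            rw [Finset.sum_comm]
            exact Finset.sum_congr rfl fun p _ => (Finset.mul_sum _ _ _).symm
        _ = 2 * ∑ p : Fin n, c p * lam p * (e p i * e p l) := by
            rw [Finset.mul_sum]
            refine Finset.sum_congr rfl fun p _ => ?_
            rw [heig' p l]; ring
    have T3 : ∑ j : Fin n, ∑ k : Fin n, A j k * φ j k = 2 * S := by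
      calc ∑ j : Fin n, ∑ k : Fin n, A j k * φ j k
          = ∑ j : Fin n, ∑ p : Fin n, (2 * c p * e p j) * ∑ k : Fin n, A j k * e p k := by
            refine Finset.sum_congr rfl fun j _ => ?_
            calc ∑ k : Fin n, A j k * φ j k
                = ∑ k : Fin n, ∑ p : Fin n, (2 * c p * e p j) * (A j k * e p k) := by
                  refine Finset.sum_congr rfl fun k _ => ?_
                  rw [hφ j k, Finset.mul_sum, Finset.mul_sum]
                  exact Finset.sum_congr rfl fun p _ => by ring
              _ = ∑ p : Fin n, (2 * c p * e p j) * ∑ k : Fin n, A j k * e p k := by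
                  rw [Finset.sum_comm]
                  exact Finset.sum_congr rfl fun p _ => (Finset.mul_sum _ _ _).symm
        _ = ∑ p : Fin n, 2 * c p * lam p * ∑ j : Fin n, e p j * e p j := by
            rw [Finset.sum_comm]
            refine Finset.sum_congr rfl fun p _ => ?_
            rw [Finset.mul_sum]
            refine Finset.sum_congr rfl fun j _ => ?_
            rw [heig' p j]; ring
        _ = 2 * S := by
            rw [hSdef, Finset.mul_sum]
            refine Finset.sum_congr rfl fun p _ => ?_
            rw [horth p p, if_pos rfl]
            ring
    have T4 : ∑ j : Fin n, φ j j = 0 := htr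
    rw [T1, T2, T3, T4]
    ring
  have hcompl : ∑ i : Fin n, ∑ p : Fin n, c p * lam p * (e p i * e p i) = S := by
    rw [Finset.sum_comm, hSdef]
    refine Finset.sum_congr rfl fun p _ => ?_
    rw [← Finset.mul_sum, horth p p, if_pos rfl, mul_one]
  have htrKN : (KNid A φ).trace = 4 * S - 2 * n * S := by
    have h1 : (KNid A φ).trace = ∑ i : Fin n, KNid A φ i i := rfl
    rw [h1]
    calc ∑ i : Fin n, KNid A φ i i
        = ∑ i : Fin n, (4 * (∑ p : Fin n, c p * lam p * (e p i * e p i)) - 2 * S) := by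
          refine Finset.sum_congr rfl fun i _ => ?_
          rw [hKN i i, if_pos rfl]; ring
      _ = 4 * S - 2 * n * S := by
          rw [Finset.sum_sub_distrib, ← Finset.mul_sum, hcompl]
          simp only [Finset.sum_const, Finset.card_univ, Fintype.card_fin, nsmul_eq_mul]
          ring
  have htrdiv : (KNid A φ).trace / (n : ℝ) = 4 * S / (n : ℝ) - 2 * S := by
    rw [htrKN]
    field_simp
  have key : ∀ i l : Fin n, 2 * ∑ p : Fin n, c p * lam p * (e p i * e p l)
      = lamE * (∑ p : Fin n, c p * (e p i * e p l))
        + (2 / (n : ℝ)) * S * (if i = l then (1:ℝ) else 0) := by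
    intro i l
    calc 2 * ∑ p : Fin n, c p * lam p * (e p i * e p l)
        = ∑ p : Fin n, (lamE * (c p * (e p i * e p l))
            + (2 / (n : ℝ)) * S * (e p i * e p l)) := by
          rw [Finset.mul_sum]
          refine Finset.sum_congr rfl fun p _ => ?_
          linear_combination (e p i * e p l) * heq p
      _ = lamE * (∑ p : Fin n, c p * (e p i * e p l))
            + (2 / (n : ℝ)) * S * (∑ p : Fin n, e p i * e p l) := by
          rw [Finset.sum_add_distrib, ← Finset.mul_sum, ← Finset.mul_sum]
      _ = _ := by rw [hcol i l]
  refine ⟨hne, htr, hsymm, ?_⟩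
  ext i l
  have h1 : tracefreeProj (KNid A φ) i l
      = KNid A φ i l - ((KNid A φ).trace / (n : ℝ)) * (if i = l then (1:ℝ) else 0) := by
    simp [tracefreeProj, Matrix.sub_apply, Matrix.smul_apply, Matrix.one_apply, smul_eq_mul]
  have h2 : (lamE • φ) i l = lamE * φ i l := rfl
  rw [h1, h2, hKN i l, htrdiv, hφ i l]
  linear_combination 2 * key i l
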